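/- Let V be a countably infinite dense subset of the Euclidean plane and let δ > 0. Then V admits a good enumeration: there is a bijection i ↦ v_i from the positive integers onto V such that d(v_i, v_{i+1}) < δ for all i ≥ 1 and the three points v₁, v₂, v₃ are not collinear. -/

import Mathlib

open MeasureTheory Metric

/-- Pairs of distinct points of `V` at distance less than `δ`: potential edges. -/
def LargEdges {S : Type*} [MetricSpace S] (V : Set S) (δ : ℝ) : Set (Sym2 V) :=
  {e | ¬ e.IsDiag ∧ ∀ u v : V, e = s(u, v) → dist (u : S) (v : S) < δ}

/-- The graph on `V` determined by a sample `ω` of the LARG model. -/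
def largGraph {S : Type*} [MetricSpace S] (V : Set S) (δ : ℝ)
    (ω : LargEdges V δ → Bool) : SimpleGraph V where
  Adj u v := ∃ h : s(u, v) ∈ LargEdges V δ, ω ⟨s(u, v), h⟩ = true
  symm := by
    constructor
    intro u v h
    rwa [Sym2.eq_swap]
  loopless := by
    constructor
    rintro u ⟨h, -⟩
    exact h.1 (by simp)

/-- `G` is geometrically existentially closed at level `δ`. -/
def IsGEC {S : Type*} [MetricSpace S] {V : Set S} (G : SimpleGraph V) (δ : ℝ) : Prop :=
  ∀ δ' : ℝ, 0 < δ' → δ' < δ → ∀ x : V, ∀ A B : Finset V,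
    Disjoint A B → x ∉ A → x ∉ B →
    (∀ u : V, u ∈ A ∨ u ∈ B → dist (u : S) (x : S) < δ) →
    ∃ z : V, z ∉ A ∧ z ∉ B ∧ z ≠ x ∧
      (∀ a ∈ A, G.Adj z a) ∧ (∀ b ∈ B, ¬ G.Adj z b) ∧
      (∀ u : V, u ∈ A ∨ u ∈ B → dist (u : S) (z : S) < δ) ∧ dist (x : S) (z : S) < δ'

/-- `G` has threshold `δ`: adjacent vertices are at distance less than `δ`. -/
def HasThreshold {S : Type*} [MetricSpace S] {V : Set S} (G : SimpleGraph V) (δ : ℝ) : Prop :=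
  ∀ u v : V, G.Adj u v → dist (u : S) (v : S) < δ

/-- A geometric `δ`-graph: `δ`-g.e.c. with threshold `δ`. -/
def IsGeometricGraph {S : Type*} [MetricSpace S] {V : Set S} (G : SimpleGraph V) (δ : ℝ) : Prop :=
  IsGEC G δ ∧ HasThreshold G δ

/-- A set is dense in itself. -/
def DenseInItself {S : Type*} [MetricSpace S] (V : Set S) : Prop :=
  ∀ x ∈ V, ∀ ε : ℝ, 0 < ε → ∃ y ∈ V, y ≠ x ∧ dist y x < ε

/-- A graph is existentially closed. -/
def IsEC {α : Type*} (G : SimpleGraph α) : Prop :=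
  ∀ A B : Finset α, Disjoint A B →
    ∃ z : α, z ∉ A ∧ z ∉ B ∧ (∀ a ∈ A, G.Adj z a) ∧ (∀ b ∈ B, ¬ G.Adj z b)

/-- A metrically convex set. -/
def MetricConvex {S : Type*} [MetricSpace S] (C : Set S) : Prop :=
  ∀ x ∈ C, ∀ y ∈ C, ∃ z ∈ C, dist x z + dist z y = dist x y

/-- `f : V → W` is a step-isometry at level `(δ, γ)`. -/
def IsStepIsometry {S T : Type*} [MetricSpace S] [MetricSpace T]
    {V : Set S} {W : Set T} (f : V → W) (δ γ : ℝ) : Prop :=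
  Function.Surjective f ∧
    ∀ u v : V, ⌊dist (u : S) (v : S) / δ⌋ = ⌊dist ((f u : T)) ((f v : T)) / γ⌋

/-- Quotient of `v` w.r.t. offset `δ` and anchor `v₀`. -/
noncomputable def quot' (δ v₀ v : ℝ) : ℤ := ⌊(v - v₀) / δ⌋

/-- Representative of `v` w.r.t. offset `δ` and anchor `v₀`. -/
noncomputable def repr' (δ v₀ v : ℝ) : ℝ := v - v₀ - δ * ⌊(v - v₀) / δ⌋

abbrev Pl := EuclideanSpace ℝ (Fin 2)

lemma exists_dense_avoid {V : Set Pl} (hVd : Dense V)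
    (F : Set Pl) (hF : F.Finite) (p : Pl) {ε : ℝ} (hε : 0 < ε) :
    ∃ v ∈ V, dist v p < ε ∧ v ∉ F := by
  have hop : IsOpen (ball p ε \ F) := isOpen_ball.sdiff hF.isClosed
  have hinf : (ball p ε).Infinite := infinite_of_mem_nhds p (ball_mem_nhds p hε)
  obtain ⟨v, hvV, hv⟩ := hVd.exists_mem_open hop (hinf.diff hF).nonempty
  exact ⟨v, hvV, mem_ball.1 hv.1, hv.2⟩

lemma exists_between'' {δ : ℝ} (hδ : 0 < δ) (a t : Pl) (hat : δ ≤ dist a t) :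
    ∃ p : Pl, dist a p ≤ δ/2 ∧ dist p t ≤ dist a t - δ/2 := by
  set d := dist a t with hd
  have hd0 : 0 < d := lt_of_lt_of_le hδ hat
  set c : ℝ := δ / (2*d) with hc
  have hc0 : 0 < c := by positivity
  have hcd : c * d = δ/2 := by rw [hc]; field_simp
  have hc1 : c ≤ 1 := by nlinarith
  have hnta : ‖t - a‖ = d := by rw [hd, dist_eq_norm, norm_sub_rev]
  refine ⟨a + c • (t - a), ?_, ?_⟩
  · have h1 : a - (a + c • (t - a)) = -(c • (t - a)) := by abel
    rw [dist_eq_norm, h1, norm_neg, norm_smul, Real.norm_eq_abs, abs_of_pos hc0, hnta, hcd]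
  · have h2 : a + c • (t - a) - t = -((1 - c) • (t - a)) := by
      rw [sub_smul, one_smul]; abel
    rw [dist_eq_norm, h2, norm_neg, norm_smul, Real.norm_eq_abs, abs_of_nonneg (by linarith), hnta]
    nlinarith

lemma chain_lemma {V : Set Pl} (hVd : Dense V) {δ : ℝ} (hδ : 0 < δ) :
    ∀ n : ℕ, ∀ a t : V, ∀ F : Finset V, t ∉ F → t ≠ a →
      dist (a : Pl) (t : Pl) < n * (δ/3) →
      ∃ M : List V, List.Chain' (fun u v : V => dist (u : Pl) (v : Pl) < δ) (a :: M) ∧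
        (a :: M).Nodup ∧ (∀ x ∈ M, x ∉ F) ∧ M.getLast? = some t := by
  intro n
  induction n with
  | zero =>
    intro a t F _ _ hdist
    simp only [Nat.cast_zero, zero_mul] at hdist
    exact absurd hdist (not_lt.2 dist_nonneg)
  | succ n ih =>
    classical
    intro a t F htF hta hdist
    by_cases hclose : dist (a : Pl) (t : Pl) < δ
    · refine ⟨[t], ?_, ?_, ?_, rfl⟩
      · simp [List.Chain', List.isChain_cons_cons, hclose]
      · simp [List.nodup_cons, Ne.symm hta]
      · simpa using htF
    · push_neg at hclose
      obtain ⟨p, hap, hpt⟩ := exists_between'' hδ (a : Pl) (t : Pl) hclose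
      have hδ12 : (0:ℝ) < δ/12 := by linarith
      obtain ⟨v, hvV, hvp, hvF⟩ := exists_dense_avoid hVd
        (Subtype.val '' ((insert a (insert t F) : Finset V) : Set V))
        ((Finset.finite_toSet _).image _) p hδ12
      set vv : V := ⟨v, hvV⟩ with hvv
      have hvnot : vv ∉ insert a (insert t F) := by
        intro h
        exact hvF ⟨vv, by exact_mod_cast h, rfl⟩
      have hva : vv ≠ a := fun h => hvnot (h ▸ Finset.mem_insert_self _ _)
      have hvt : vv ≠ t := fun h => hvnot (by simp [h])
      have hvFnot : vv ∉ F := fun h => hvnot (by simp [h])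
      have hdav : dist (a : Pl) (vv : Pl) < δ := by
        have h1 : dist (a : Pl) v ≤ dist (a : Pl) p + dist p v := dist_triangle _ _ _
        have h2 : dist p v < δ/12 := by rwa [dist_comm]
        have : dist (a : Pl) (vv : Pl) = dist (a : Pl) v := rfl
        rw [this]; linarith
      have hdvt : dist (vv : Pl) (t : Pl) < n * (δ/3) := by
        have h1 : dist (vv : Pl) (t : Pl) ≤ dist v p + dist p (t : Pl) := dist_triangle _ _ _
        have hvvv : dist (vv : Pl) (t : Pl) = dist v (t : Pl) := rfl
        rcases Nat.eq_zero_or_pos n with rfl | hn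
        · push_cast at hdist; linarith
        · have hn1 : (1:ℝ) ≤ n := by exact_mod_cast hn
          push_cast at hdist ⊢
          rw [hvvv]
          nlinarith
      obtain ⟨M, hMc, hMn, hMF, hMl⟩ := ih vv t (insert a F)
        (by simp [htF, hta]) (fun h => hvt h.symm) hdvt
      have hMne : M ≠ [] := by rintro rfl; simp at hMl
      refine ⟨vv :: M, ?_, ?_, ?_, ?_⟩
      · exact List.isChain_cons_cons.2 ⟨hdav, hMc⟩
      · rw [List.nodup_cons]
        refine ⟨?_, hMn⟩
        rw [List.mem_cons]
        rintro (h | h)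
        · exact hva h.symm
        · exact (hMF a h) (Finset.mem_insert_self _ _)
      · intro x hx
        rw [List.mem_cons] at hx
        rcases hx with rfl | hx
        · exact hvFnot
        · exact fun h => hMF x hx (Finset.mem_insert_of_mem h)
      · obtain ⟨m, M', rfl⟩ := List.exists_cons_of_ne_nil hMne
        rw [List.getLast?_cons_cons]
        exact hMl

lemma exists_triple {V : Set Pl} (hVd : Dense V) (hVne : V.Nonempty) {δ : ℝ} (hδ : 0 < δ) :
    ∃ v₁ v₂ v₃, v₁ ∈ V ∧ v₂ ∈ V ∧ v₃ ∈ V ∧ dist v₁ v₂ < δ ∧ dist v₂ v₃ < δ ∧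
      ¬ Collinear ℝ ({v₁, v₂, v₃} : Set Pl) := by
  obtain ⟨v₁, hv₁⟩ := hVne
  obtain ⟨v₂, hv₂, hd21, hne21⟩ := exists_dense_avoid hVd {v₁} (Set.finite_singleton _) v₁
    (half_pos hδ)
  have hne12 : v₁ ≠ v₂ := fun h => hne21 (by simp [h])
  -- the line through v₁ v₂
  set L : AffineSubspace ℝ Pl := line[ℝ, v₁, v₂] with hL
  haveI : FiniteDimensional ℝ L.direction := by
    rw [hL]
    exact (collinear_pair ℝ v₁ v₂).finiteDimensional_direction_affineSpan
  have hLclosed : IsClosed (L : Set Pl) := L.closed_of_finiteDimensional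
  -- a perpendicular direction
  set d : Pl := v₁ - v₂ with hd
  have hd0 : d ≠ 0 := sub_ne_zero.2 hne12
  set n : Pl := (WithLp.equiv 2 (Fin 2 → ℝ)).symm ![-(d 1), d 0] with hn
  have hn0 : n ≠ 0 := by
    intro h
    apply hd0
    have h0 : n 0 = 0 := by rw [h]; rfl
    have h1 : n 1 = 0 := by rw [h]; rfl
    rw [hn] at h0 h1
    simp at h0 h1
    ext i
    fin_cases i <;> simp [h0, h1] <;> rfl
  have hnn : 0 < ‖n‖ := norm_pos_iff.2 hn0
  set c : ℝ := (δ/4) / ‖n‖ with hc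
  have hc0 : 0 < c := by positivity
  set q : Pl := c • n + v₂ with hq
  have hqL : q ∉ L := by
    rw [hq, hL]
    intro hmem
    rw [show c • n + v₂ = c • n +ᵥ v₂ from rfl] at hmem
    obtain ⟨r, hr⟩ := vadd_right_mem_affineSpan_pair.1 hmem
    rw [show v₁ -ᵥ v₂ = d from rfl] at hr
    have h0 : r * d 0 = c * n 0 := by
      have := congrFun (congrArg (WithLp.equiv 2 (Fin 2 → ℝ)) hr) 0
      simpa using congrArg (fun x : Pl => x 0) hr
    have h1 : r * d 1 = c * n 1 := by
      simpa using congrArg (fun x : Pl => x 1) hr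
    have hn0' : n 0 = -(d 1) := by rw [hn]; simp
    have hn1' : n 1 = d 0 := by rw [hn]; simp
    rw [hn0'] at h0; rw [hn1'] at h1
    have hdne : d 0 ≠ 0 ∨ d 1 ≠ 0 := by
      by_contra h
      push_neg at h
      apply hd0
      ext i
      fin_cases i <;> simp [h.1, h.2] <;> rfl
    have hsq : c * (d 0 ^ 2 + d 1 ^ 2) = 0 := by linear_combination (d 1) * h0 - (d 0) * h1
    have hzz : d 0 ^ 2 + d 1 ^ 2 = 0 := by
      rcases mul_eq_zero.1 hsq with h | h
      · linarith
      · exact h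
    rcases hdne with h | h
    · exact h ((pow_eq_zero_iff (two_ne_zero)).1 (by nlinarith [sq_nonneg (d 1)]))
    · exact h ((pow_eq_zero_iff (two_ne_zero)).1 (by nlinarith [sq_nonneg (d 0)]))
  obtain ⟨r, hr0, hrball⟩ := Metric.isOpen_iff.1 hLclosed.isOpen_compl q hqL
  have hqv₂ : dist q v₂ = δ/4 := by
    rw [hq, dist_eq_norm]
    rw [add_sub_cancel_right, norm_smul, Real.norm_eq_abs, abs_of_pos hc0, hc]
    field_simp
  -- pick v₃ in V close to q, off the line
  have hrmin : (0:ℝ) < min r (δ/4) := lt_min hr0 (by positivity)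
  obtain ⟨v₃, hv₃V, hv₃b⟩ := hVd.exists_mem_open isOpen_ball (nonempty_ball.2 hrmin)
  have hd3q : dist v₃ q < min r (δ/4) := mem_ball.1 hv₃b
  have hv₃L : v₃ ∉ (L : Set Pl) :=
    hrball (mem_ball.2 (lt_of_lt_of_le hd3q (min_le_left _ _)))
  refine ⟨v₁, v₂, v₃, hv₁, hv₂, hv₃V, ?_, ?_, ?_⟩
  · rw [dist_comm]; linarith
  · have h1 : dist v₂ v₃ ≤ dist v₂ q + dist q v₃ := dist_triangle _ _ _
    have h2 : dist q v₃ < δ/4 := by rw [dist_comm]; exact lt_of_lt_of_le hd3q (min_le_right _ _)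
    have h3 : dist v₂ q = δ/4 := by rw [dist_comm]; exact hqv₂
    linarith
  · intro hcol
    exact hv₃L (hcol.mem_affineSpan_of_mem_of_ne (Set.mem_insert _ _)
      (Set.mem_insert_of_mem _ (Set.mem_insert _ _))
      (Set.mem_insert_of_mem _ (Set.mem_insert_of_mem _ rfl)) hne12)


theorem exists_good_enumeration (V : Set (EuclideanSpace ℝ (Fin 2)))
    (hVc : V.Countable) (hVi : V.Infinite) (hVd : Dense V) (δ : ℝ) (hδ : 0 < δ) :
    ∃ e : ℕ+ → V, Function.Bijective e ∧
      (∀ i : ℕ+, dist ((e i : EuclideanSpace ℝ (Fin 2))) ((e (i + 1) : EuclideanSpace ℝ (Fin 2))) < δ) ∧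
      ¬ Collinear ℝ ({(e 1 : EuclideanSpace ℝ (Fin 2)), (e 2 : EuclideanSpace ℝ (Fin 2)),
        (e 3 : EuclideanSpace ℝ (Fin 2))} : Set (EuclideanSpace ℝ (Fin 2))) := by
  classical
  haveI : Countable V := hVc.to_subtype
  haveI : Infinite V := hVi.to_subtype
  haveI : Encodable V := Encodable.ofCountable V
  haveI : Denumerable V := Denumerable.ofEncodableOfInfinite V
  set w : ℕ → V := ⇑(Denumerable.eqv V).symm with hw
  have hwinj : Function.Injective w := (Denumerable.eqv V).symm.injective
  have hwsurj : Function.Surjective w := (Denumerable.eqv V).symm.surjective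
  obtain ⟨p₁, p₂, p₃, hp₁, hp₂, hp₃, h12, h23, hncol⟩ := exists_triple hVd hVi.nonempty hδ
  set R : V → V → Prop := fun u v => dist (u : Pl) (v : Pl) < δ with hR
  set v₁ : V := ⟨p₁, hp₁⟩
  set v₂ : V := ⟨p₂, hp₂⟩
  set v₃ : V := ⟨p₃, hp₃⟩
  set l₀ : List V := [v₁, v₂, v₃] with hl₀
  have hne12 : p₁ ≠ p₂ := ne₁₂_of_not_collinear hncol
  have hne13 : p₁ ≠ p₃ := ne₁₃_of_not_collinear hncol
  have hne23 : p₂ ≠ p₃ := ne₂₃_of_not_collinear hncol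
  set Good : List V → Prop := fun l => List.Chain' R l ∧ l.Nodup ∧ l.take 3 = l₀ with hGood
  have good₀ : Good l₀ := by
    refine ⟨?_, ?_, rfl⟩
    · rw [hl₀]
      refine List.isChain_cons_cons.2 ⟨h12, List.isChain_cons_cons.2 ⟨h23, List.isChain_singleton _⟩⟩
    · rw [hl₀]
      have h12' : v₁ ≠ v₂ := fun h => hne12 (congrArg Subtype.val h)
      have h13' : v₁ ≠ v₃ := fun h => hne13 (congrArg Subtype.val h)
      have h23' : v₂ ≠ v₃ := fun h => hne23 (congrArg Subtype.val h)
      simp [List.nodup_cons, h12', h13', h23']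
  have hlen3 : ∀ l, Good l → 3 ≤ l.length := by
    intro l hl
    have h := congrArg List.length hl.2.2
    rw [List.length_take, hl₀] at h
    simp at h
    omega
  have step : ∀ (k : ℕ) (l : List V), Good l → ∃ l', Good l' ∧ l <+: l' ∧ w k ∈ l' := by
    intro k l hl
    by_cases hin : w k ∈ l
    · exact ⟨l, hl, List.prefix_refl l, hin⟩
    · have hlne : l ≠ [] := by
        intro h; have := hlen3 l hl; rw [h] at this; simp at this
      set a := l.getLast hlne with ha
      have haml : a ∈ l := List.getLast_mem hlne
      obtain ⟨m, hm⟩ := exists_nat_gt (dist (a : Pl) (w k : Pl) / (δ/3))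
      have hdist : dist (a : Pl) (w k : Pl) < m * (δ/3) := by
        rw [div_lt_iff₀ (by linarith)] at hm
        linarith
      obtain ⟨M, hMc, hMn, hMF, hMl⟩ := chain_lemma hVd hδ m a (w k) l.toFinset
        (by simpa using hin) (fun h => hin (h ▸ haml)) hdist
      have hMne : M ≠ [] := by rintro rfl; simp at hMl
      have hwkM : w k ∈ M := by
        have h1 := List.getLast?_eq_getLast_of_ne_nil hMne
        rw [hMl] at h1
        have h2 : w k = M.getLast hMne := by exact Option.some_injective _ h1
        rw [h2]; exact List.getLast_mem hMne
      refine ⟨l ++ M, ⟨?_, ?_, ?_⟩, List.prefix_append _ _, by simp [hwkM]⟩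
      · refine List.IsChain.append hl.1 (hMc.tail) ?_
        intro x hx y hy
        rw [List.getLast?_eq_getLast_of_ne_nil hlne] at hx
        have hxa : x = a := ((by simpa using hx : l.getLast hlne = x)).symm
        subst hxa
        exact (List.isChain_cons.1 hMc).1 y hy
      · refine hl.2.1.append (hMn.of_cons) ?_
        intro x hxl hxM
        exact hMF x hxM (List.mem_toFinset.2 hxl)
      · rw [List.take_append_of_le_length (hlen3 l hl)]
        exact hl.2.2
  choose ext hext1 hext2 hext3 using step
  let L : ℕ → {l : List V // Good l} := fun n =>
    Nat.rec ⟨l₀, good₀⟩ (fun k p => ⟨ext k p.1 p.2, hext1 k p.1 p.2⟩) n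
  have hLgood : ∀ n, Good (L n).1 := by intro n; exact (L n).2
  have hLsucc : ∀ n, (L n).1 <+: (L (n+1)).1 := fun n => hext2 n _ _
  have hLmem : ∀ n, w n ∈ (L (n+1)).1 := fun n => hext3 n _ _
  have hLpref : ∀ {m n : ℕ}, m ≤ n → (L m).1 <+: (L n).1 := by
    intro m n h
    induction n with
    | zero => rw [Nat.le_zero.1 h]
    | succ n ih =>
      rcases Nat.lt_or_ge m (n+1) with h' | h'
      · exact (ih (by omega)).trans (hLsucc n)
      · have : m = n + 1 := by omega
        rw [this]
  have hlen : ∀ n : ℕ, n ≤ (L n).1.length := by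
    intro n
    have hsub : (Finset.range n).image w ⊆ (L n).1.toFinset := by
      intro x hx
      obtain ⟨k, hk, rfl⟩ := Finset.mem_image.1 hx
      rw [Finset.mem_range] at hk
      exact List.mem_toFinset.2 ((hLpref (by omega : k + 1 ≤ n)).subset (hLmem k))
    have h1 : ((Finset.range n).image w).card = n := by
      rw [Finset.card_image_of_injective _ hwinj, Finset.card_range]
    have h2 := Finset.card_le_card hsub
    rw [h1, List.toFinset_card_of_nodup (hLgood n).2.1] at h2
    exact h2
  have hglt : ∀ k : ℕ, k < (L (k+1)).1.length := fun k => hlen (k+1)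
  set g : ℕ → V := fun k => (L (k+1)).1[k]'(hglt k) with hg
  have hgc : ∀ (k n : ℕ) (h : k < (L n).1.length), (L n).1[k]'h = g k := by
    intro k n h
    rcases le_total n (k+1) with hle | hle
    · exact (hLpref hle).getElem h
    · exact ((hLpref hle).getElem (hglt k)).symm
  have hginj : Function.Injective g := by
    intro j k hjk
    by_contra hne
    set n := max j k + 1 with hn
    have hj : j < (L n).1.length := lt_of_lt_of_le (by omega) (hlen n)
    have hk : k < (L n).1.length := lt_of_lt_of_le (by omega) (hlen n)
    have h1 : (L n).1[j]'hj = (L n).1[k]'hk := by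
      rw [hgc j n hj, hgc k n hk]; exact hjk
    have h2 := List.nodup_iff_injective_get.1 (hLgood n).2.1
      (show (L n).1.get ⟨j, hj⟩ = (L n).1.get ⟨k, hk⟩ by simpa using h1)
    exact hne (by simpa using congrArg Fin.val h2)
  have hgsurj : Function.Surjective g := by
    intro x
    obtain ⟨k, rfl⟩ := hwsurj x
    obtain ⟨i, hi, hix⟩ := List.mem_iff_getElem.1 (hLmem k)
    refine ⟨i, ?_⟩
    rw [← hgc i (k+1) hi]
    exact hix
  have hgchain : ∀ k : ℕ, R (g k) (g (k+1)) := by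
    intro k
    have hlen2 : k + 1 < (L (k+2)).1.length := lt_of_lt_of_le (by omega) (hlen (k+2))
    have hc := List.isChain_iff_getElem.1 (hLgood (k+2)).1 k (by omega)
    have e1 : (L (k+2)).1[k]'(by omega) = g k := by
      simpa using hgc k (k+2) (by omega)
    have e2 : (L (k+2)).1[k+1]'(by omega) = g (k+1) := by
      simpa using hgc (k+1) (k+2) hlen2
    rwa [e1, e2] at hc
  have hginit3 : ∀ (j : ℕ) (hj : j < 3),
      g j = l₀[j]'(by rw [hl₀]; simpa using hj) := by
    intro j hj
    have h3 : 3 ≤ (L 3).1.length := hlen 3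
    have ht : (L 3).1.take 3 = l₀ := (hLgood 3).2.2
    have hpre : (L 3).1.take 3 <+: (L 3).1 := List.take_prefix _ _
    rw [ht] at hpre
    have h4 := hpre.getElem (i := j) (by rw [hl₀]; simpa using hj)
    rw [← hgc j 3 (by omega)]
    exact h4.symm
  have hginit : g 0 = v₁ ∧ g 1 = v₂ ∧ g 2 = v₃ :=
    ⟨hginit3 0 (by norm_num), hginit3 1 (by norm_num), hginit3 2 (by norm_num)⟩
  -- build e
  refine ⟨fun i => g i.natPred, ⟨?_, ?_⟩, ?_, ?_⟩
  · intro i j hij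
    exact PNat.natPred_injective (hginj hij)
  · intro x
    obtain ⟨k, rfl⟩ := hgsurj x
    exact ⟨⟨k+1, Nat.succ_pos k⟩, rfl⟩
  · intro i
    have h1 : ((i + 1 : ℕ+) : ℕ) = (i : ℕ) + 1 := by simp
    have h2 : (0:ℕ) < (i : ℕ) := i.property
    have hnp : (i + 1 : ℕ+).natPred = i.natPred + 1 := by
      simp only [PNat.natPred, h1]; omega
    show dist ((g i.natPred : V) : Pl) ((g ((i+1 : ℕ+)).natPred : V) : Pl) < δ
    rw [hnp]
    exact hgchain i.natPred
  · show ¬ Collinear ℝ ({((g (1:ℕ+).natPred : V) : Pl), ((g (2:ℕ+).natPred : V) : Pl),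
        ((g (3:ℕ+).natPred : V) : Pl)} : Set Pl)
    have e1 : g (1 : ℕ+).natPred = v₁ := hginit.1
    have e2 : g (2 : ℕ+).natPred = v₂ := hginit.2.1
    have e3 : g (3 : ℕ+).natPred = v₃ := hginit.2.2
    rw [e1, e2, e3]
    exact hncol
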